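/- The complement of the language { w₁ · b · w₂ · a · w₃ : b ∉ w₁, count of t in w₂ ∈ [d₁,d₂) } ∪ { w : b ∉ w } over a finite alphabet A ∋ a,b,t is regular. -/

import Mathlib

section Aux

set_option linter.unusedSectionVars false

variable {A : Type} [Fintype A] [DecidableEq A]

/-- Sum of single-character regexes over a list of characters. -/
def cprSym (l : List A) : RegularExpression A :=
  l.foldr (fun c e => RegularExpression.char c + e) 0

lemma cprSym_mem (l : List A) (w : List A) :
    w ∈ (cprSym l).matches' ↔ ∃ c ∈ l, w = [c] := by
  induction l with
  | nil => simp [cprSym]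
  | cons c l ih =>
    simp only [cprSym, List.foldr_cons] at *
    rw [RegularExpression.matches'_add, Language.mem_add, ih]
    constructor
    · rintro (h | ⟨d, hd, rfl⟩)
      · rw [RegularExpression.matches'_char] at h
        replace h : w = [c] := h
        exact ⟨c, by simp, h⟩
      · exact ⟨d, by simp [hd], rfl⟩
    · rintro ⟨d, hd, rfl⟩
      rcases List.mem_cons.1 hd with rfl | hd
      · left; rw [RegularExpression.matches'_char]; rfl
      · right; exact ⟨d, hd, rfl⟩

/-- Words all of whose characters lie in `l`. -/
def cprSeg (l : List A) : RegularExpression A := (cprSym l).star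

lemma cpr_flatten_singletons (w : List A) : (w.map (fun c => [c])).flatten = w := by
  induction w with
  | nil => rfl
  | cons c w ih => simp [ih]

lemma cprSeg_mem (l : List A) (w : List A) :
    w ∈ (cprSeg l).matches' ↔ ∀ c ∈ w, c ∈ l := by
  rw [cprSeg, RegularExpression.matches'_star, Language.mem_kstar]
  constructor
  · rintro ⟨L, rfl, hL⟩ c hc
    rw [List.mem_flatten] at hc
    obtain ⟨y, hy, hcy⟩ := hc
    obtain ⟨d, hd, rfl⟩ := (cprSym_mem l y).1 (hL y hy)
    rw [List.mem_singleton] at hcy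
    exact hcy ▸ hd
  · intro h
    refine ⟨w.map (fun c => [c]), (cpr_flatten_singletons w).symm, ?_⟩
    intro y hy
    simp only [List.mem_map] at hy
    obtain ⟨c, hc, rfl⟩ := hy
    exact (cprSym_mem l [c]).2 ⟨c, h c hc, rfl⟩

/-- All characters different from `x`. -/
noncomputable def cprNe (x : A) : List A := (Finset.univ.filter (fun c => c ≠ x)).toList

lemma cprNe_mem (x c : A) : c ∈ cprNe x ↔ c ≠ x := by simp [cprNe]

/-- All characters different from both `a` and `t`. -/
noncomputable def cprNe2 (a t : A) : List A :=
  (Finset.univ.filter (fun c => c ≠ a ∧ c ≠ t)).toList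

lemma cprNe2_mem (a t c : A) : c ∈ cprNe2 a t ↔ c ≠ a ∧ c ≠ t := by simp [cprNe2]

/-- Regex for words `s` with no decomposition `s = w₂ ++ a :: w₃`
where `count t w₂ < k`. -/
noncomputable def cprBad0 (a t : A) : ℕ → RegularExpression A
  | 0 => cprSeg (Finset.univ.toList)
  | k + 1 =>
      if a = t then cprSeg (cprNe2 a t)
      else cprSeg (cprNe2 a t) +
        (cprSeg (cprNe2 a t) * RegularExpression.char t) * cprBad0 a t k

/-- Regex for words `s` with no decomposition `s = w₂ ++ a :: w₃`
where `count t w₂ ∈ [d, d + k)`. -/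
noncomputable def cprBadD (a t : A) (k : ℕ) : ℕ → RegularExpression A
  | 0 => cprBad0 a t k
  | d + 1 =>
      cprSeg (cprNe t) + (cprSeg (cprNe t) * RegularExpression.char t) * cprBadD a t k d

def cprBadSet (a t : A) (d₁ d₂ : ℕ) : Set (List A) :=
  { s | ∀ w₂ w₃ : List A, s = w₂ ++ a :: w₃ → ¬(d₁ ≤ w₂.count t ∧ w₂.count t < d₂) }

lemma cpr_exists_first (c : A) {w : List A} (h : c ∈ w) :
    ∃ u v, w = u ++ c :: v ∧ c ∉ u := by
  induction w with
  | nil => simp at h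
  | cons d w ih =>
    by_cases hdc : d = c
    · exact ⟨[], w, by simp [hdc], by simp⟩
    · rcases List.mem_cons.1 h with h1 | h1
      · exact absurd h1.symm hdc
      · obtain ⟨u, v, rfl, hu⟩ := ih h1
        refine ⟨d :: u, v, rfl, ?_⟩
        simp only [List.mem_cons, not_or]
        exact ⟨fun h2 => hdc h2.symm, hu⟩

lemma cpr_first_unique {c : A} : ∀ {u v u' v' : List A},
    u ++ c :: v = u' ++ c :: v' → c ∉ u → c ∉ u' → u = u' ∧ v = v' := by
  intro u
  induction u with
  | nil =>
    intro v u' v' h hu hu'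
    cases u' with
    | nil => simpa using h
    | cons d u' =>
      simp only [List.nil_append, List.cons_append, List.cons.injEq] at h
      exact absurd (h.1 ▸ List.mem_cons_self) hu'
  | cons d u ih =>
    intro v u' v' h hu hu'
    cases u' with
    | nil =>
      simp only [List.cons_append, List.nil_append, List.cons.injEq] at h
      exact absurd (h.1.symm ▸ List.mem_cons_self) hu
    | cons d' u' =>
      simp only [List.cons_append, List.cons.injEq] at h
      obtain ⟨rfl, h⟩ := h
      have := ih h (fun hc => hu (List.mem_cons_of_mem _ hc))
        (fun hc => hu' (List.mem_cons_of_mem _ hc))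
      exact ⟨by rw [this.1], this.2⟩

lemma cprBlk_mem (l : List A) (t : A) (X : RegularExpression A) (w : List A) :
    w ∈ ((cprSeg l * RegularExpression.char t) * X).matches' ↔
      ∃ u v, w = u ++ t :: v ∧ (∀ c ∈ u, c ∈ l) ∧ v ∈ X.matches' := by
  rw [RegularExpression.matches'_mul, Language.mem_mul]
  constructor
  · rintro ⟨x, hx, v, hv, rfl⟩
    rw [RegularExpression.matches'_mul, Language.mem_mul] at hx
    obtain ⟨u, hu, y, hy, rfl⟩ := hx
    rw [RegularExpression.matches'_char] at hy
    replace hy : y = [t] := hy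
    subst hy
    exact ⟨u, v, by simp, (cprSeg_mem l u).1 hu, hv⟩
  · rintro ⟨u, v, rfl, hu, hv⟩
    refine ⟨u ++ [t], ?_, v, hv, by simp⟩
    rw [RegularExpression.matches'_mul]
    exact Language.append_mem_mul ((cprSeg_mem l u).2 hu)
      (by rw [RegularExpression.matches'_char]; rfl)

lemma count_eq_zero_of_not_mem' {t : A} {u : List A} (h : t ∉ u) : u.count t = 0 :=
  List.count_eq_zero.2 h

lemma cprBad0_correct (a t : A) :
    ∀ k, (cprBad0 a t k).matches' = cprBadSet a t 0 k := by
  intro k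
  induction k with
  | zero =>
    ext s
    simp only [cprBad0, cprSeg_mem, cprBadSet, Set.mem_setOf_eq]
    constructor
    · intro _ w₂ w₃ _ hc; omega
    · intro _ c _; simp
  | succ k ih =>
    ext s
    by_cases hat : a = t
    · simp only [cprBad0, if_pos hat, cprSeg_mem, cprBadSet, Set.mem_setOf_eq]
      constructor
      · rintro h w₂ w₃ rfl hc
        have hmem : a ∈ w₂ ++ a :: w₃ := by simp
        exact ((cprNe2_mem a t a).1 (h a hmem)).1 rfl
      · intro h c hc
        rw [cprNe2_mem]
        subst hat
        constructor <;>
        · intro h2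
          rw [h2] at hc
          obtain ⟨u, v, rfl, hu⟩ := cpr_exists_first a hc
          exact h u v rfl ⟨Nat.zero_le _, by
            rw [count_eq_zero_of_not_mem' hu]; omega⟩
    · simp only [cprBad0, if_neg hat, RegularExpression.matches'_add, Language.mem_add,
        cprSeg_mem, cprBlk_mem, ih, cprBadSet, Set.mem_setOf_eq]
      constructor
      · rintro (h | ⟨u, v, rfl, hu, hv⟩) w₂ w₃ heq hc
        · subst heq
          have hmem : a ∈ w₂ ++ a :: w₃ := by simp
          exact ((cprNe2_mem a t a).1 (h a hmem)).1 rfl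
        · have hua : a ∉ u := fun h2 => ((cprNe2_mem a t a).1 (hu a h2)).1 rfl
          have hut : t ∉ u := fun h2 => ((cprNe2_mem a t t).1 (hu t h2)).2 rfl
          rcases List.append_eq_append_iff.1 heq.symm with ⟨m, hm1, hm2⟩ | ⟨m, hm1, hm2⟩
          · -- u = w₂ ++ m, a :: w₃ = m ++ t :: v
            cases m with
            | nil =>
              simp only [List.nil_append] at hm2
              injection hm2 with h1 _
              exact hat h1
            | cons x m =>
              injection hm2 with h1 h2
              subst h1
              exact hua (by rw [hm1]; simp)
          · -- w₂ = u ++ m, t :: v = m ++ a :: w₃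
            cases m with
            | nil =>
              injection hm2 with h1 _
              exact hat h1.symm
            | cons x m =>
              injection hm2 with h1 h2
              subst h1
              have hcw : w₂.count t = u.count t + (t :: m).count t := by
                rw [hm1, List.count_append]
              rw [count_eq_zero_of_not_mem' hut] at hcw
              have hvm := hv m w₃ h2
              simp only [List.count_cons_self] at hcw
              omega
      · intro h
        by_cases hts : t ∈ s
        · obtain ⟨u, v, rfl, hut⟩ := cpr_exists_first t hts
          have hua : a ∉ u := by
            intro hau
            obtain ⟨p, q, rfl, _⟩ := cpr_exists_first a hau
            have htp : t ∉ p := fun hc => hut (by simp [hc])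
            exact h p (q ++ t :: v) (by simp) ⟨Nat.zero_le _, by
              rw [count_eq_zero_of_not_mem' htp]; omega⟩
          right
          refine ⟨u, v, rfl, ?_, ?_⟩
          · intro c hc
            rw [cprNe2_mem]
            exact ⟨fun h2 => hua (h2 ▸ hc), fun h2 => hut (h2 ▸ hc)⟩
          · rintro m w₃ rfl hm
            refine h (u ++ t :: m) w₃ (by simp) ⟨Nat.zero_le _, ?_⟩
            rw [List.count_append, count_eq_zero_of_not_mem' hut]
            simp only [List.count_cons_self]
            omega
        · left
          intro c hc
          rw [cprNe2_mem]
          refine ⟨?_, fun h2 => hts (h2 ▸ hc)⟩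
          intro h2
          rw [h2] at hc
          obtain ⟨u, v, rfl, _⟩ := cpr_exists_first a hc
          have htu : t ∉ u := fun hc2 => hts (by simp [hc2])
          exact h u v rfl ⟨Nat.zero_le _, by
            rw [count_eq_zero_of_not_mem' htu]; omega⟩

lemma cprBadD_correct (a t : A) (k : ℕ) :
    ∀ d, (cprBadD a t k d).matches' = cprBadSet a t d (d + k) := by
  intro d
  induction d with
  | zero => rw [cprBadD, cprBad0_correct, Nat.zero_add]
  | succ d ih =>
    ext s
    simp only [cprBadD, RegularExpression.matches'_add, Language.mem_add,
      cprSeg_mem, cprBlk_mem, ih, cprBadSet, Set.mem_setOf_eq]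
    constructor
    · rintro (h | ⟨u, v, rfl, hu, hv⟩) w₂ w₃ heq hc
      · subst heq
        have htw : t ∉ w₂ := fun hc2 => ((cprNe_mem t t).1 (h t (by simp [hc2]))) rfl
        rw [count_eq_zero_of_not_mem' htw] at hc
        omega
      · have hut : t ∉ u := fun h2 => ((cprNe_mem t t).1 (hu t h2)) rfl
        rcases List.append_eq_append_iff.1 heq.symm with ⟨m, hm1, hm2⟩ | ⟨m, hm1, hm2⟩
        · -- u = w₂ ++ m
          have : t ∉ w₂ := fun hc2 => hut (hm1 ▸ List.mem_append_left _ hc2)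
          rw [count_eq_zero_of_not_mem' this] at hc
          omega
        · -- w₂ = u ++ m, t :: v = m ++ a :: w₃
          cases m with
          | nil =>
            simp only [List.append_nil] at hm1
            rw [hm1, count_eq_zero_of_not_mem' hut] at hc
            omega
          | cons x m =>
            injection hm2 with h1 h2
            subst h1
            have hvm := hv m w₃ h2
            have hcw : w₂.count t = u.count t + (t :: m).count t := by
              rw [hm1, List.count_append]
            rw [count_eq_zero_of_not_mem' hut] at hcw
            simp only [List.count_cons_self] at hcw
            omega
    · intro h
      by_cases hts : t ∈ s
      · obtain ⟨u, v, rfl, hut⟩ := cpr_exists_first t hts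
        right
        refine ⟨u, v, rfl, fun c hc => (cprNe_mem t c).2 (fun h2 => hut (h2 ▸ hc)), ?_⟩
        rintro m w₃ rfl hm
        refine h (u ++ t :: m) w₃ (by simp) ?_
        rw [List.count_append, count_eq_zero_of_not_mem' hut]
        simp only [List.count_cons_self]
        omega
      · left
        exact fun c hc => (cprNe_mem t c).2 (fun h2 => hts (h2 ▸ hc))

end Aux

/-- The complement of
`{ w₁·b·w₂·a·w₃ : b ∉ w₁, #t(w₂) ∈ [d₁,d₂) } ∪ { w : b ∉ w }` is regular. -/
theorem complement_present_regular (A : Type) [Fintype A] [DecidableEq A]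
    (a b t : A) (d₁ d₂ : ℕ) (hd : d₁ ≤ d₂) :
    ∃ e : RegularExpression A,
      e.matches' =
        ({ w : List A | ∃ w₁ w₂ w₃ : List A,
              w = w₁ ++ [b] ++ w₂ ++ [a] ++ w₃ ∧ b ∉ w₁ ∧ w₂.count t ∈ Set.Ico d₁ d₂ } ∪
          { w : List A | b ∉ w })ᶜ := by
  classical
  refine ⟨(cprSeg (cprNe b) * RegularExpression.char b) * cprBadD a t (d₂ - d₁) d₁, ?_⟩
  have hk : d₁ + (d₂ - d₁) = d₂ := by omega
  ext w
  rw [cprBlk_mem]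
  constructor
  · rintro ⟨u, v, rfl, hu, hv⟩
    rw [cprBadD_correct, hk] at hv
    have hbu : b ∉ u := fun h2 => ((cprNe_mem b b).1 (hu b h2)) rfl
    intro hmem
    rcases hmem with hmem | hmem
    · obtain ⟨w₁, w₂, w₃, heq, hbw₁, hcnt⟩ := hmem
      have heq' : u ++ b :: v = w₁ ++ b :: (w₂ ++ a :: w₃) := by
        rw [heq]; simp
      obtain ⟨rfl, rfl⟩ := cpr_first_unique heq' hbu hbw₁
      exact hv w₂ w₃ rfl (Set.mem_Ico.1 hcnt)
    · exact hmem (by simp)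
  · intro h
    have hL1 : ¬ ∃ w₁ w₂ w₃ : List A,
        w = w₁ ++ [b] ++ w₂ ++ [a] ++ w₃ ∧ b ∉ w₁ ∧ w₂.count t ∈ Set.Ico d₁ d₂ :=
      fun hx => h (Or.inl hx)
    have hbw : b ∈ w := not_not.1 fun hx => h (Or.inr hx)
    obtain ⟨u, v, rfl, hbu⟩ := cpr_exists_first b hbw
    refine ⟨u, v, rfl, fun c hc => (cprNe_mem b c).2 (fun h2 => hbu (h2 ▸ hc)), ?_⟩
    rw [cprBadD_correct, hk]
    rintro w₂ w₃ rfl hcnt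
    exact hL1 ⟨u, w₂, w₃, by simp, hbu, Set.mem_Ico.2 hcnt⟩
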